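/- Let f : {0,1}^n → {0,1} and let τ_1,…,τ_M be UC-violating tuples for f whose augmentations are pairwise disjoint subsets of {0,1}^n (no point of {0,1}^n lies in the augmentations of two different tuples). Then there exist M pairwise disjoint UC-violating triples for f (no point of {0,1}^n appears in two different triples). Moreover, if all points of every τ_i have Hamming weight in an interval I ⊆ [0,n], then all points of the M triples also have Hamming weight in I. -/
import Mathlib


/-- Hamming weight of `x ∈ {0,1}^n`. -/
def wt {n : ℕ} (x : Fin n → Bool) : ℕ :=
  (Finset.univ.filter (fun i => x i = true)).card

/-- The union (bitwise OR) of the points `x_1, …, x_k`. -/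
def unionAll {n k : ℕ} (x : Fin k → (Fin n → Bool)) : Fin n → Bool :=
  fun i => decide (∃ j, x j i = true)

/-- The partial union `x_1 ∪ … ∪ x_{j+1}` (i.e. the union of the coordinates up to
index `j` in `Fin k`). -/
def punion {n k : ℕ} (x : Fin k → (Fin n → Bool)) (j : Fin k) : Fin n → Bool :=
  fun i => decide (∃ j' : Fin k, j' ≤ j ∧ x j' i = true)

/-- `(x_1, …, x_k, x_1 ∪ … ∪ x_k)` is a UC-violating tuple for `f`: `k ≥ 1`,
`f(x_j) = 1` for all `j`, and `f(x_1 ∪ … ∪ x_k) = 0`. -/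
def IsUCTuple {n : ℕ} (f : (Fin n → Bool) → Bool) {k : ℕ}
    (x : Fin k → (Fin n → Bool)) : Prop :=
  0 < k ∧ (∀ j, f (x j) = true) ∧ f (unionAll x) = false

/-- The augmentation of the tuple `(x_1, …, x_k)`: the points `x_1, …, x_k` together
with all partial unions `x_1 ∪ … ∪ x_j` for `2 ≤ j ≤ k`. -/
def augmentation {n k : ℕ} (x : Fin k → (Fin n → Bool)) : Set (Fin n → Bool) :=
  Set.range x ∪ {z | ∃ j : Fin k, 1 ≤ (j : ℕ) ∧ z = punion x j}

/-- The points of the tuple `(x_1, …, x_k, x_1 ∪ … ∪ x_k)`. -/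
def tuplePoints {n k : ℕ} (x : Fin k → (Fin n → Bool)) : Set (Fin n → Bool) :=
  Set.range x ∪ {unionAll x}

/-- `(u, v, w)` is a UC-violating triple for `f`: `w = u ∪ v`, `f(u) = f(v) = 1`,
`f(w) = 0`. -/
def IsUCTriple {n : ℕ} (f : (Fin n → Bool) → Bool)
    (t : (Fin n → Bool) × (Fin n → Bool) × (Fin n → Bool)) : Prop :=
  t.2.2 = (fun i => t.1 i || t.2.1 i) ∧ f t.1 = true ∧ f t.2.1 = true ∧ f t.2.2 = false

/-- The points of a triple. -/
def triplePoints {n : ℕ} (t : (Fin n → Bool) × (Fin n → Bool) × (Fin n → Bool)) :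
    Set (Fin n → Bool) := {t.1, t.2.1, t.2.2}

lemma wt_mono {n : ℕ} {p q : Fin n → Bool} (h : ∀ i, p i = true → q i = true) :
    wt p ≤ wt q := by
  apply Finset.card_le_card
  intro i hi
  simp only [Finset.mem_filter] at *
  exact ⟨hi.1, h i hi.2⟩

lemma punion_zero {n k : ℕ} (x : Fin k → (Fin n → Bool)) (hk : 0 < k) :
    punion x ⟨0, hk⟩ = x ⟨0, hk⟩ := by
  funext i
  simp only [punion]
  rw [show x ⟨0, hk⟩ i = decide (x ⟨0, hk⟩ i = true) by simp]
  apply decide_eq_decide.mpr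
  constructor
  · rintro ⟨j', hle, hx⟩
    have : j' = ⟨0, hk⟩ := le_antisymm hle (by simp [Fin.le_def])
    rwa [this] at hx
  · intro h; exact ⟨⟨0, hk⟩, le_refl _, h⟩

lemma punion_last {n k : ℕ} (x : Fin k → (Fin n → Bool)) (hk : 0 < k) :
    punion x ⟨k - 1, by omega⟩ = unionAll x := by
  funext i
  simp only [punion, unionAll]
  apply decide_eq_decide.mpr
  constructor
  · rintro ⟨j', _, hx⟩; exact ⟨j', hx⟩
  · rintro ⟨j', hx⟩
    exact ⟨j', by simp [Fin.le_def]; omega, hx⟩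

lemma key_lemma {n k : ℕ} (f : (Fin n → Bool) → Bool) (x : Fin k → (Fin n → Bool))
    (h : IsUCTuple f x) (a b : ℕ) (hwt : ∀ p ∈ tuplePoints x, wt p ∈ Set.Icc a b) :
    ∃ t, IsUCTriple f t ∧ triplePoints t ⊆ augmentation x ∧
      ∀ p ∈ triplePoints t, wt p ∈ Set.Icc a b := by
  obtain ⟨hk, hf1, hf0⟩ := h
  set P : ℕ → Prop := fun m => f (punion x ⟨min m (k - 1), by omega⟩) = false with hP
  have hPk : P (k - 1) := by
    simpa [hP, min_self, punion_last x hk] using hf0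
  have hex : ∃ m, P m := ⟨k - 1, hPk⟩
  set j := Nat.find hex with hj
  have hjP : P j := Nat.find_spec hex
  have hjle : j ≤ k - 1 := Nat.find_le hPk
  have hjk : j < k := by omega
  have hfj : f (punion x ⟨j, hjk⟩) = false := by
    have := hjP; simp only [hP, Nat.min_eq_left hjle] at this
    exact this
  have hjpos : 0 < j := by
    by_contra h0
    have hj0 : j = 0 := by omega
    rw [show (⟨j, hjk⟩ : Fin k) = ⟨0, hk⟩ from Fin.ext (by simp [hj0])] at hfj
    rw [punion_zero x hk, hf1 _] at hfj
    exact absurd hfj (by simp)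
  have hj1k : j - 1 < k := by omega
  have hfj1 : f (punion x ⟨j - 1, hj1k⟩) = true := by
    have hnot : ¬ P (j - 1) := Nat.find_min hex (by omega)
    simp only [hP] at hnot
    have hm : min (j - 1) (k - 1) = j - 1 := by omega
    rw [show (⟨min (j-1) (k-1), by omega⟩ : Fin k) = ⟨j - 1, hj1k⟩ from by simp [hm]] at hnot
    simpa using hnot
  set u := punion x ⟨j - 1, hj1k⟩ with hu
  set v := x ⟨j, hjk⟩ with hv
  set w := punion x ⟨j, hjk⟩ with hw
  have hsplit : w = fun i => u i || v i := by
    funext i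
    simp only [hw, hu, hv, punion]
    rw [show x ⟨j, hjk⟩ i = decide (x ⟨j, hjk⟩ i = true) by simp, ← Bool.decide_or]
    apply decide_eq_decide.mpr
    constructor
    · rintro ⟨j', hle, hx⟩
      rcases Nat.lt_or_ge (j' : ℕ) j with hlt | hge
      · refine Or.inl ⟨j', ?_, hx⟩
        show (j' : ℕ) ≤ j - 1
        omega
      · have h1 : (j' : ℕ) ≤ j := hle
        have : j' = ⟨j, hjk⟩ := by
          apply Fin.ext; show (j' : ℕ) = j; omega
        exact Or.inr (this ▸ hx)
    · rintro (⟨j', hle, hx⟩ | hx)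
      · refine ⟨j', ?_, hx⟩
        have h1 : (j' : ℕ) ≤ j - 1 := hle
        show (j' : ℕ) ≤ j
        omega
      · exact ⟨⟨j, hjk⟩, le_refl _, hx⟩
  have hlow : ∀ m : Fin k, wt (x ⟨0, hk⟩) ≤ wt (punion x m) := by
    intro m
    apply wt_mono
    intro i hi
    simp only [punion, decide_eq_true_iff]
    exact ⟨⟨0, hk⟩, by simp [Fin.le_def], hi⟩
  have hhigh : ∀ m : Fin k, wt (punion x m) ≤ wt (unionAll x) := by
    intro m
    apply wt_mono
    intro i hi
    simp only [punion, unionAll, decide_eq_true_iff] at *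
    obtain ⟨j', _, hx⟩ := hi
    exact ⟨j', hx⟩
  have h0mem : wt (x ⟨0, hk⟩) ∈ Set.Icc a b := hwt _ (Or.inl ⟨⟨0, hk⟩, rfl⟩)
  have hUmem : wt (unionAll x) ∈ Set.Icc a b := hwt _ (Or.inr rfl)
  have hpu : ∀ m : Fin k, wt (punion x m) ∈ Set.Icc a b := by
    intro m
    exact ⟨le_trans h0mem.1 (hlow m), le_trans (hhigh m) hUmem.2⟩
  refine ⟨(u, v, w), ⟨hsplit, hfj1, hf1 _, hfj⟩, ?_, ?_⟩
  · intro p hp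
    rcases hp with hp | hp | hp
    · subst hp
      rcases Nat.eq_zero_or_pos (j - 1) with h0 | hpos
      · left
        refine ⟨⟨0, hk⟩, ?_⟩
        rw [hu, show (⟨j - 1, hj1k⟩ : Fin k) = ⟨0, hk⟩ from by simp [h0]]
        exact (punion_zero x hk).symm
      · right
        exact ⟨⟨j - 1, hj1k⟩, hpos, rfl⟩
    · subst hp; left; exact ⟨⟨j, hjk⟩, rfl⟩
    · simp only [Set.mem_singleton_iff] at hp
      subst hp; right; exact ⟨⟨j, hjk⟩, hjpos, rfl⟩
  · intro p hp
    rcases hp with hp | hp | hp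
    · subst hp; exact hpu _
    · subst hp; exact hwt _ (Or.inl ⟨⟨j, hjk⟩, rfl⟩)
    · simp only [Set.mem_singleton_iff] at hp
      subst hp; exact hpu _


/-- If `τ_1, …, τ_M` are UC-violating tuples for `f` whose augmentations
are pairwise disjoint, then there exist `M` pairwise disjoint UC-violating triples for
`f`; moreover, if all points of every `τ_i` have Hamming weight in an interval
`[a, b] ⊆ [0, n]`, then so do all points of the `M` triples. -/
theorem disjoint_tuples_to_disjoint_triples (n M : ℕ) (f : (Fin n → Bool) → Bool)
    (kk : Fin M → ℕ) (xs : ∀ i, Fin (kk i) → (Fin n → Bool))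
    (htuple : ∀ i, IsUCTuple f (xs i))
    (hdisj : ∀ i j, i ≠ j → Disjoint (augmentation (xs i)) (augmentation (xs j)))
    (a b : ℕ) (hwt : ∀ i, ∀ p ∈ tuplePoints (xs i), wt p ∈ Set.Icc a b) :
    ∃ σ : Fin M → (Fin n → Bool) × (Fin n → Bool) × (Fin n → Bool),
      (∀ i, IsUCTriple f (σ i)) ∧
      (∀ i j, i ≠ j → Disjoint (triplePoints (σ i)) (triplePoints (σ j))) ∧
      (∀ i, ∀ p ∈ triplePoints (σ i), wt p ∈ Set.Icc a b) := by
  choose σ h1 h2 h3 using fun i => key_lemma f (xs i) (htuple i) a b (hwt i)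
  exact ⟨σ, h1, fun i j hij => (hdisj i j hij).mono (h2 i) (h2 j), h3⟩
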